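/- arXiv:1702.03801 — 2 statements merged into one kernel-verified Lean document; each statement's English description precedes it below -/
import Mathlib

section
/- Let (X, {R_0,...,R_d}) be a symmetric association scheme with Γ = (X, R_1) connected, H the unweighted distribution diagram of R_1, and suppose H' = H \ {0,1} is disconnected. Let Ĩ = {i : 1 ≤ i ≤ d, p_{11}^i = p_{11}^0}, let Ũ be the vertex set of a connected component of H' having more than one vertex which minimizes Σ_{i∈Ũ} v_i among all such components, and let W̃ = {2,...,d} \ (Ĩ ∪ Ũ). If W̃ ≠ ∅, then Γ has diameter two; equivalently, p_{11}^i > 0 for every i with 1 < i ≤ d. -/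
/-- A symmetric association scheme with `d` classes on a finite vertex set `X`:
a partition of `X × X` into nonempty symmetric relations `R 0, …, R d`, where
`R 0` is the identity relation, together with intersection numbers `p i j k`. -/
structure SymAssocScheme (X : Type*) [Fintype X] (d : ℕ) where
  R : Fin (d + 1) → X → X → Prop
  R_nonempty : ∀ i, ∃ a b, R i a b
  R_symm : ∀ i a b, R i a b → R i b a
  R_zero : ∀ a b, R 0 a b ↔ a = b
  R_unique : ∀ a b, ∃! i, R i a b
  p : Fin (d + 1) → Fin (d + 1) → Fin (d + 1) → ℕ
  p_spec : ∀ (i j k : Fin (d + 1)) (a b : X), R k a b →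
    {c : X | R i a c ∧ R j c b}.ncard = p i j k

namespace SymAssocScheme

variable {X : Type*} [Fintype X] {d : ℕ}

/-- The (simple) graph `Γ = (X, R_i)` of the basis relation `R_i`. -/
def graph (A : SymAssocScheme X d) (i : Fin (d + 1)) : SimpleGraph X where
  Adj a b := a ≠ b ∧ A.R i a b
  symm := ⟨fun a b h => ⟨h.1.symm, A.R_symm i a b h.2⟩⟩
  loopless := ⟨fun a h => h.1 rfl⟩

/-- The unweighted distribution diagram `H_i` (with loops discarded):
`j ~ k` iff `p i j k + p i k j > 0`. -/
def diagram (A : SymAssocScheme X d) (i : Fin (d + 1)) : SimpleGraph (Fin (d + 1)) where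
  Adj j k := j ≠ k ∧ 0 < A.p i j k + A.p i k j
  symm := ⟨fun j k h => ⟨h.1.symm, by omega⟩⟩
  loopless := ⟨fun j h => h.1 rfl⟩

end SymAssocScheme

/-! ### Auxiliary lemmas -/

section GraphAux

/-- From a shortest walk of length `n+1` we can step down to a vertex
at distance `n` adjacent to the endpoint. -/
lemma SymAssocScheme.stepdown {V : Type*} {G : SimpleGraph V} (hc : G.Connected) {a b : V}
    {n : ℕ} (h : G.dist a b = n + 1) : ∃ c, G.dist a c = n ∧ G.Adj c b := by
  have h' : G.dist b a = n + 1 := by rwa [SimpleGraph.dist_comm] at h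
  obtain ⟨w, hw⟩ := (hc.preconnected b a).exists_walk_length_eq_dist
  rw [h'] at hw
  cases w with
  | nil => simp at hw
  | cons hadj q =>
    rename_i c
    have hq : q.length = n := by simpa using hw
    have h1 : G.dist a c ≤ n := by
      have := SimpleGraph.dist_le q.reverse
      simpa [hq] using this
    have h2 : n ≤ G.dist a c := by
      have ht : G.dist b a ≤ G.dist b c + G.dist c a := hc.dist_triangle
      have hbc : G.dist b c ≤ 1 := by
        have := SimpleGraph.dist_le hadj.toWalk
        simpa using this
      have hco : G.dist c a = G.dist a c := SimpleGraph.dist_comm ..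
      omega
    exact ⟨c, le_antisymm h1 h2, hadj.symm⟩

/-- A pair at distance two has a common neighbour. -/
lemma SymAssocScheme.exists_mid {V : Type*} {G : SimpleGraph V} (hc : G.Connected) {a b : V}
    (h : G.dist a b = 2) : ∃ m, G.Adj a m ∧ G.Adj m b := by
  have h' : G.dist a b = 1 + 1 := by omega
  obtain ⟨c, hc1, hadj⟩ := SymAssocScheme.stepdown hc h'
  exact ⟨c, SimpleGraph.dist_eq_one_iff_adj.mp hc1, hadj⟩

/-- In a connected graph, a reachable pair of distinct vertices yields a neighbour
of the first vertex. -/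
lemma SymAssocScheme.exists_adj_of_reachable_ne {V : Type*} {G : SimpleGraph V} {u v : V}
    (h : G.Reachable u v) (hne : u ≠ v) : ∃ w, G.Adj u w := by
  obtain ⟨p⟩ := h
  cases p with
  | nil => exact absurd rfl hne
  | cons h q => exact ⟨_, h⟩

end GraphAux

namespace SymAssocScheme

variable {X : Type*} [Fintype X] {d : ℕ} (A : SymAssocScheme X d)

lemma R_refl (a : X) : A.R 0 a a := (A.R_zero a a).mpr rfl

lemma R_eq {i j : Fin (d + 1)} {a b : X} (hi : A.R i a b) (hj : A.R j a b) : i = j := by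
  obtain ⟨k, -, hu⟩ := A.R_unique a b
  rw [hu i hi, hu j hj]

lemma p_pos_iff {i j k : Fin (d + 1)} {a b : X} (h : A.R k a b) :
    0 < A.p i j k ↔ ∃ c, A.R i a c ∧ A.R j c b := by
  rw [← A.p_spec i j k a b h, Set.ncard_pos (Set.toFinite _)]
  exact ⟨fun ⟨c, hc⟩ => ⟨c, hc⟩, fun ⟨c, hc⟩ => ⟨c, hc⟩⟩

lemma exists_R (j : Fin (d + 1)) (x : X) : ∃ z, A.R j x z := by
  obtain ⟨a, b, hab⟩ := A.R_nonempty j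
  have h0 : 0 < A.p j j 0 := (A.p_pos_iff (A.R_refl a)).2 ⟨b, hab, A.R_symm _ _ _ hab⟩
  obtain ⟨c, hc, -⟩ := (A.p_pos_iff (A.R_refl x)).1 h0
  exact ⟨c, hc⟩

lemma one_ne_zero_fin (hd : 0 < d) : (1 : Fin (d + 1)) ≠ 0 := by
  intro h
  rw [Fin.ext_iff, Fin.val_one', Fin.val_zero, Nat.mod_eq_of_lt (by omega)] at h
  exact one_ne_zero h

lemma R_one_ne (hd : 0 < d) {a b : X} (h : A.R 1 a b) : a ≠ b := by
  rintro rfl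
  exact one_ne_zero_fin hd (A.R_eq h (A.R_refl a))

lemma adj_of_R1 (hd : 0 < d) {a b : X} (h : A.R 1 a b) : (A.graph 1).Adj a b :=
  ⟨A.R_one_ne hd h, h⟩

lemma dist_le_of_rel (hd : 0 < d) (hconn : (A.graph 1).Connected) :
    ∀ (n : ℕ) {j : Fin (d + 1)} {a b a' b' : X}, A.R j a b → A.R j a' b' →
      (A.graph 1).dist a b = n → (A.graph 1).dist a' b' ≤ n := by
  intro n
  induction n with
  | zero =>
    intro j a b a' b' hab hab' h0
    have he : a = b := (hconn.dist_eq_zero_iff).mp h0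
    subst he
    have hj0 : j = 0 := A.R_eq hab (A.R_refl a)
    subst hj0
    have : a' = b' := (A.R_zero a' b').mp hab'
    subst this
    simp
  | succ n ih =>
    intro j a b a' b' hab hab' h
    obtain ⟨c, hcd, hadj⟩ := stepdown hconn h
    obtain ⟨k, hk, -⟩ := A.R_unique a c
    have hp : 0 < A.p k 1 j := (A.p_pos_iff hab).2 ⟨c, hk, hadj.2⟩
    obtain ⟨c', hk', h1'⟩ := (A.p_pos_iff hab').1 hp
    have hd1 : (A.graph 1).dist a' c' ≤ n := ih hk hk' hcd
    have ht : (A.graph 1).dist a' b' ≤ (A.graph 1).dist a' c' + (A.graph 1).dist c' b' :=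
      hconn.dist_triangle
    have hcb : (A.graph 1).dist c' b' ≤ 1 := by
      have := SimpleGraph.dist_le (A.adj_of_R1 hd h1').toWalk
      simpa using this
    omega

lemma dist_eq_of_rel (hd : 0 < d) (hconn : (A.graph 1).Connected) {j : Fin (d + 1)}
    {a b a' b' : X} (h : A.R j a b) (h' : A.R j a' b') :
    (A.graph 1).dist a' b' = (A.graph 1).dist a b :=
  le_antisymm (A.dist_le_of_rel hd hconn _ h h' rfl) (A.dist_le_of_rel hd hconn _ h' h rfl)

lemma tri_adj {j k : Fin (d + 1)} {a b c : X} (h1 : A.R j a c) (h2 : A.R 1 c b)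
    (h3 : A.R k a b) (hne : j ≠ k) : (A.diagram 1).Adj j k := by
  have hp : 0 < A.p 1 j k :=
    (A.p_pos_iff (A.R_symm _ _ _ h3)).2 ⟨c, A.R_symm _ _ _ h2, A.R_symm _ _ _ h1⟩
  exact ⟨hne, by omega⟩

/-- The connected component of the punctured diagram containing a class `j ∉ {0,1}`. -/
def cmp (j : Fin (d + 1)) (hj : j ≠ 0 ∧ j ≠ 1) :
    ((A.diagram 1).induce {j : Fin (d + 1) | j ≠ 0 ∧ j ≠ 1}).ConnectedComponent :=
  SimpleGraph.connectedComponentMk _ ⟨j, hj⟩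

lemma cmp_eq_of_tri {j k : Fin (d + 1)} (hj : j ≠ 0 ∧ j ≠ 1) (hk : k ≠ 0 ∧ k ≠ 1)
    {a b c : X} (h1 : A.R j a c) (h2 : A.R 1 c b) (h3 : A.R k a b) :
    A.cmp j hj = A.cmp k hk := by
  by_cases he : j = k
  · subst he; rfl
  · refine SimpleGraph.ConnectedComponent.sound (SimpleGraph.Adj.reachable ?_)
    exact A.tri_adj h1 h2 h3 he

lemma rel_V (hd : 0 < d) {j : Fin (d + 1)} {a b : X} (h : A.R j a b)
    (h2 : 2 ≤ (A.graph 1).dist a b) : j ≠ 0 ∧ j ≠ 1 := by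
  constructor
  · rintro rfl
    have : a = b := (A.R_zero a b).mp h
    subst this
    rw [SimpleGraph.dist_self] at h2
    omega
  · rintro rfl
    have hle : (A.graph 1).dist a b ≤ 1 := by
      have := SimpleGraph.dist_le (A.adj_of_R1 hd h).toWalk
      simpa using this
    omega

/-- Separation: distinct components of the punctured diagram correspond to
regions at mutual distance at least 3 from a deep vertex. -/
lemma sep (hd : 0 < d) (hconn : (A.graph 1).Connected) {x z' z : X} {s j : Fin (d + 1)}
    (hs' : A.R s x z') (hj' : A.R j x z) (hs : s ≠ 0 ∧ s ≠ 1) (hjV : j ≠ 0 ∧ j ≠ 1)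
    (hdeep : 3 ≤ (A.graph 1).dist x z) (hne : A.cmp s hs ≠ A.cmp j hjV) :
    3 ≤ (A.graph 1).dist z' z := by
  by_contra hlt
  push_neg at hlt
  have hcase : (A.graph 1).dist z' z = 0 ∨ (A.graph 1).dist z' z = 1 ∨
      (A.graph 1).dist z' z = 2 := by omega
  rcases hcase with h0 | h1 | h2
  · have hzz : z' = z := hconn.dist_eq_zero_iff.mp h0
    subst hzz
    have hsj : s = j := A.R_eq hs' hj'
    subst hsj
    exact hne rfl
  · have hadj : (A.graph 1).Adj z' z := SimpleGraph.dist_eq_one_iff_adj.mp h1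
    exact hne (A.cmp_eq_of_tri hs hjV hs' hadj.2 hj')
  · obtain ⟨u, hu1, hu2⟩ := exists_mid hconn h2
    obtain ⟨k, hk, -⟩ := A.R_unique x u
    by_cases hk0 : k = 0
    · subst hk0
      have hxu : x = u := (A.R_zero x u).mp hk
      subst hxu
      have : (A.graph 1).dist x z ≤ 1 := by
        have := SimpleGraph.dist_le hu2.toWalk; simpa using this
      omega
    by_cases hk1 : k = 1
    · subst hk1
      have ht : (A.graph 1).dist x z ≤ (A.graph 1).dist x u + (A.graph 1).dist u z :=
        hconn.dist_triangle
      have l1 : (A.graph 1).dist x u ≤ 1 := by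
        have := SimpleGraph.dist_le (A.adj_of_R1 hd hk).toWalk; simpa using this
      have l2 : (A.graph 1).dist u z ≤ 1 := by
        have := SimpleGraph.dist_le hu2.toWalk; simpa using this
      omega
    · have hkV : k ≠ 0 ∧ k ≠ 1 := ⟨hk0, hk1⟩
      have c1 : A.cmp k hkV = A.cmp j hjV := A.cmp_eq_of_tri hkV hjV hk hu2.2 hj'
      have c2 : A.cmp k hkV = A.cmp s hs := A.cmp_eq_of_tri hkV hs hk hu1.symm.2 hs'
      exact hne (c2.symm.trans c1)

/-- Every deep class is in the same component as some class realized at distance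
exactly 3. -/
lemma d3rep (hd : 0 < d) (hconn : (A.graph 1).Connected) :
    ∀ (n : ℕ) {j : Fin (d + 1)} {a b : X}, A.R j a b → (A.graph 1).dist a b = n → 3 ≤ n →
    ∃ (j₃ : Fin (d + 1)) (h₃ : j₃ ≠ 0 ∧ j₃ ≠ 1) (a₃ b₃ : X),
      A.R j₃ a₃ b₃ ∧ (A.graph 1).dist a₃ b₃ = 3 ∧
      ∀ (hj : j ≠ 0 ∧ j ≠ 1), A.cmp j₃ h₃ = A.cmp j hj := by
  intro n
  induction n with
  | zero => intro j a b _ _ h3; omega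
  | succ n ih =>
    intro j a b hab hdist h3
    by_cases hn : n + 1 = 3
    · have hjV : j ≠ 0 ∧ j ≠ 1 := A.rel_V hd hab (by omega)
      refine ⟨j, hjV, a, b, hab, by omega, fun hj => rfl⟩
    · have h3n : 3 ≤ n := by omega
      obtain ⟨c, hcd, hadj⟩ := stepdown hconn hdist
      obtain ⟨k, hk, -⟩ := A.R_unique a c
      have hkV : k ≠ 0 ∧ k ≠ 1 := A.rel_V hd hk (by omega)
      have hjV : j ≠ 0 ∧ j ≠ 1 := A.rel_V hd hab (by omega)
      have hck : A.cmp k hkV = A.cmp j hjV := A.cmp_eq_of_tri hkV hjV hk hadj.2 hab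
      obtain ⟨j₃, h₃, a₃, b₃, hr, hd3, hcomp⟩ := ih hk hcd h3n
      exact ⟨j₃, h₃, a₃, b₃, hr, hd3, fun hj => (hcomp hkV).trans hck⟩

/-- All deep classes (realized at distance at least 3) lie in a single component
of the punctured diagram. -/
lemma uniq (hd : 0 < d) (hconn : (A.graph 1).Connected) {j k : Fin (d + 1)}
    (hj : j ≠ 0 ∧ j ≠ 1) (hk : k ≠ 0 ∧ k ≠ 1) {a b a' b' : X}
    (hjr : A.R j a b) (hkr : A.R k a' b') (hdj : 3 ≤ (A.graph 1).dist a b)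
    (hdk : 3 ≤ (A.graph 1).dist a' b') : A.cmp j hj = A.cmp k hk := by
  obtain ⟨j₁, h₁, a₁, b₁, hr₁, hd₁, hc₁⟩ := A.d3rep hd hconn _ hjr rfl hdj
  obtain ⟨j₂, h₂, a₂, b₂, hr₂, hd₂, hc₂⟩ := A.d3rep hd hconn _ hkr rfl hdk
  rw [← hc₁ hj, ← hc₂ hk]
  by_contra hne
  obtain ⟨x⟩ : Nonempty X := hconn.nonempty
  obtain ⟨z₁, hz₁⟩ := A.exists_R j₁ x
  obtain ⟨z₂, hz₂⟩ := A.exists_R j₂ x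
  have hd₁' : (A.graph 1).dist x z₁ = 3 := (A.dist_eq_of_rel hd hconn hr₁ hz₁).trans hd₁
  have hd₂' : (A.graph 1).dist x z₂ = 3 := (A.dist_eq_of_rel hd hconn hr₂ hz₂).trans hd₂
  have hsep12 : 3 ≤ (A.graph 1).dist z₂ z₁ :=
    A.sep hd hconn hz₂ hz₁ h₂ h₁ (by omega) (Ne.symm hne)
  have hdz : 3 ≤ (A.graph 1).dist z₁ z₂ := by rwa [SimpleGraph.dist_comm] at hsep12
  obtain ⟨q, hqr, -⟩ := A.R_unique z₁ z₂
  have hqV : q ≠ 0 ∧ q ≠ 1 := A.rel_V hd hqr (by omega)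
  -- a vertex u adjacent to x at distance 2 from z₁
  have hdz₁x : (A.graph 1).dist z₁ x = 2 + 1 := by rw [SimpleGraph.dist_comm]; omega
  obtain ⟨u, hu2, hux⟩ := stepdown hconn hdz₁x
  obtain ⟨q', hq'z, -⟩ := A.R_unique z₂ u
  have hq'0 : q' ≠ 0 := by
    rintro rfl
    have : z₂ = u := (A.R_zero z₂ u).mp hq'z
    subst this
    omega
  have hq'1 : q' ≠ 1 := by
    rintro rfl
    have hadj : (A.graph 1).Adj z₂ u := A.adj_of_R1 hd hq'z
    have ht : (A.graph 1).dist x z₂ ≤ (A.graph 1).dist x u + (A.graph 1).dist u z₂ :=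
      hconn.dist_triangle
    have l1 : (A.graph 1).dist x u ≤ 1 := by
      have := SimpleGraph.dist_le hux.symm.toWalk; simpa using this
    have l2 : (A.graph 1).dist u z₂ ≤ 1 := by
      have := SimpleGraph.dist_le hadj.symm.toWalk; simpa using this
    omega
  have hcq' : A.cmp q' ⟨hq'0, hq'1⟩ = A.cmp j₂ h₂ :=
    A.cmp_eq_of_tri ⟨hq'0, hq'1⟩ h₂ hq'z hux.2 (A.R_symm _ _ _ hz₂)
  -- component of q equals that of j₂
  have hqj₂ : A.cmp q hqV = A.cmp j₂ h₂ := by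
    rw [← hcq']
    by_contra hne'
    have hsep' := A.sep hd hconn hq'z (A.R_symm _ _ _ hqr) ⟨hq'0, hq'1⟩ hqV (by omega)
      (Ne.symm hne')
    rw [SimpleGraph.dist_comm] at hsep'
    omega
  -- a vertex u' adjacent to x at distance 2 from z₂
  have hdz₂x : (A.graph 1).dist z₂ x = 2 + 1 := by rw [SimpleGraph.dist_comm]; omega
  obtain ⟨u', hu'2, hu'x⟩ := stepdown hconn hdz₂x
  obtain ⟨q'', hq''z, -⟩ := A.R_unique z₁ u'
  have hq''0 : q'' ≠ 0 := by
    rintro rfl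
    have : z₁ = u' := (A.R_zero z₁ u').mp hq''z
    subst this
    omega
  have hq''1 : q'' ≠ 1 := by
    rintro rfl
    have hadj : (A.graph 1).Adj z₁ u' := A.adj_of_R1 hd hq''z
    have ht : (A.graph 1).dist x z₁ ≤ (A.graph 1).dist x u' + (A.graph 1).dist u' z₁ :=
      hconn.dist_triangle
    have l1 : (A.graph 1).dist x u' ≤ 1 := by
      have := SimpleGraph.dist_le hu'x.symm.toWalk; simpa using this
    have l2 : (A.graph 1).dist u' z₁ ≤ 1 := by
      have := SimpleGraph.dist_le hadj.symm.toWalk; simpa using this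
    omega
  have hcq'' : A.cmp q'' ⟨hq''0, hq''1⟩ = A.cmp j₁ h₁ :=
    A.cmp_eq_of_tri ⟨hq''0, hq''1⟩ h₁ hq''z hu'x.2 (A.R_symm _ _ _ hz₁)
  have hqj₁ : A.cmp q hqV = A.cmp j₁ h₁ := by
    rw [← hcq'']
    by_contra hne'
    have hsep' := A.sep hd hconn hq''z hqr ⟨hq''0, hq''1⟩ hqV (by omega) (Ne.symm hne')
    rw [SimpleGraph.dist_comm] at hsep'
    omega
  exact hne (hqj₁.symm.trans hqj₂)

/-- A class `i` with `p₁₁ⁱ = p₁₁⁰` is isolated in the punctured diagram. -/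
lemma iso {i : Fin (d + 1)} (hI : A.p 1 1 i = A.p 1 1 0)
    {k : Fin (d + 1)} (hk1 : k ≠ 1) (hadj : (A.diagram 1).Adj i k) : False := by
  obtain ⟨hne, hpos⟩ := hadj
  have key : ∀ c b : X, A.R i c b → ∀ u, A.R 1 c u → A.R 1 u b := by
    intro c b hcb u hcu
    have h1 : ({u | A.R 1 c u ∧ A.R 1 u b}).ncard = A.p 1 1 i := A.p_spec 1 1 i c b hcb
    have h2 : ({u | A.R 1 c u ∧ A.R 1 u c}).ncard = A.p 1 1 0 :=
      A.p_spec 1 1 0 c c (A.R_refl c)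
    have hset : {u | A.R 1 c u ∧ A.R 1 u c} = {u | A.R 1 c u} := by
      ext v
      simp only [Set.mem_setOf_eq]
      exact ⟨fun h => h.1, fun h => ⟨h, A.R_symm _ _ _ h⟩⟩
    rw [hset] at h2
    have hsub : {u | A.R 1 c u ∧ A.R 1 u b} ⊆ {u | A.R 1 c u} := fun v hv => hv.1
    have heq : {u | A.R 1 c u ∧ A.R 1 u b} = {u | A.R 1 c u} :=
      Set.eq_of_subset_of_ncard_le hsub (by rw [h1, h2, hI]) (Set.toFinite _)
    have hm : u ∈ {u | A.R 1 c u} := hcu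
    rw [← heq] at hm
    exact hm.2
  have hcase : 0 < A.p 1 i k ∨ 0 < A.p 1 k i := by omega
  rcases hcase with hp | hp
  · obtain ⟨a, b, hab⟩ := A.R_nonempty k
    obtain ⟨c, hc1, hci⟩ := (A.p_pos_iff hab).1 hp
    have h1ab : A.R 1 a b := key c b hci a (A.R_symm _ _ _ hc1)
    exact hk1 (A.R_eq hab h1ab)
  · obtain ⟨a, b, hab⟩ := A.R_nonempty i
    obtain ⟨c, hc1, hck⟩ := (A.p_pos_iff hab).1 hp
    have h1cb : A.R 1 c b := key a b hab c hc1
    exact hk1 (A.R_eq hck h1cb)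

/-- A class with `p₁₁ʲ = 0` is only realized at distance at least 3. -/
lemma deep_of_p0 (hd : 0 < d) (hconn : (A.graph 1).Connected) {j : Fin (d + 1)}
    (hj0 : j ≠ 0) (hj1 : j ≠ 1) (hp : A.p 1 1 j = 0) {a b : X} (h : A.R j a b) :
    3 ≤ (A.graph 1).dist a b := by
  by_contra hlt
  push_neg at hlt
  have hcase : (A.graph 1).dist a b = 0 ∨ (A.graph 1).dist a b = 1 ∨
      (A.graph 1).dist a b = 2 := by omega
  rcases hcase with h0 | h1 | h2
  · have : a = b := hconn.dist_eq_zero_iff.mp h0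
    subst this
    exact hj0 (A.R_eq h (A.R_refl a))
  · have hadj : (A.graph 1).Adj a b := SimpleGraph.dist_eq_one_iff_adj.mp h1
    exact hj1 (A.R_eq h hadj.2)
  · obtain ⟨u, hu1, hu2⟩ := exists_mid hconn h2
    have : 0 < A.p 1 1 j := (A.p_pos_iff h).2 ⟨u, hu1.2, hu2.2⟩
    omega

/-- Main claim: if there is a deep class `j₂`, then any class `s` in a different
component of the punctured diagram satisfies `p₁₁ˢ = p₁₁⁰`. -/
lemma main_claim (hd : 0 < d) (hconn : (A.graph 1).Connected) {j₂ : Fin (d + 1)}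
    (h2V : j₂ ≠ 0 ∧ j₂ ≠ 1) (hp0 : A.p 1 1 j₂ = 0) {s : Fin (d + 1)}
    (hsV : s ≠ 0 ∧ s ≠ 1) (hcmp : A.cmp s hsV ≠ A.cmp j₂ h2V) :
    A.p 1 1 s = A.p 1 1 0 := by
  obtain ⟨a, b, hab⟩ := A.R_nonempty j₂
  have hdeep := A.deep_of_p0 hd hconn h2V.1 h2V.2 hp0 hab
  obtain ⟨j₃, h₃, a₃, b₃, hr₃, hd₃, hc₃⟩ := A.d3rep hd hconn _ hab rfl hdeep
  have hc₃' : A.cmp j₃ h₃ = A.cmp j₂ h2V := hc₃ h2V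
  -- a witness configuration: a₃ ~ c₀ with dist c₀ b₃ = 2
  have hstep : (A.graph 1).dist b₃ a₃ = 2 + 1 := by rw [SimpleGraph.dist_comm]; omega
  obtain ⟨c₀, hc₀d, hc₀a⟩ := stepdown hconn hstep
  obtain ⟨g, hg, -⟩ := A.R_unique c₀ b₃
  have h1ac : A.R 1 a₃ c₀ := hc₀a.symm.2
  have hpg : 0 < A.p j₃ g 1 := (A.p_pos_iff h1ac).2 ⟨b₃, hr₃, A.R_symm _ _ _ hg⟩
  -- now work at a pair realizing s
  obtain ⟨x, z', hsxz⟩ := A.R_nonempty s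
  have hgoal : {c | A.R 1 x c ∧ A.R 1 c z'} = {c | A.R 1 x c ∧ A.R 1 c x} := by
    have hN : {c | A.R 1 x c ∧ A.R 1 c x} = {c | A.R 1 x c} := by
      ext v
      simp only [Set.mem_setOf_eq]
      exact ⟨fun h => h.1, fun h => ⟨h, A.R_symm _ _ _ h⟩⟩
    rw [hN]
    ext y
    simp only [Set.mem_setOf_eq]
    refine ⟨fun h => h.1, fun hy => ⟨hy, ?_⟩⟩
    by_contra hny
    obtain ⟨t, ht, -⟩ := A.R_unique z' y
    have ht1 : t ≠ 1 := by
      rintro rfl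
      exact hny (A.R_symm _ _ _ ht)
    have ht0 : t ≠ 0 := by
      rintro rfl
      have hz'y : z' = y := (A.R_zero z' y).mp ht
      subst hz'y
      exact hsV.2 (A.R_eq hsxz hy)
    have hts : A.cmp t ⟨ht0, ht1⟩ = A.cmp s hsV :=
      (A.cmp_eq_of_tri hsV ⟨ht0, ht1⟩ (A.R_symm _ _ _ hsxz) hy ht).symm
    -- pull the witness configuration to (x, y)
    obtain ⟨e, hje, hge⟩ := (A.p_pos_iff hy).1 hpg
    have hdxe : (A.graph 1).dist x e = 3 := (A.dist_eq_of_rel hd hconn hr₃ hje).trans hd₃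
    have hdey : (A.graph 1).dist e y = 2 := by
      have h' := A.dist_eq_of_rel hd hconn hg hge
      rw [h', SimpleGraph.dist_comm]
      exact hc₀d
    have hs1 : 3 ≤ (A.graph 1).dist z' e :=
      A.sep hd hconn hsxz hje hsV h₃ (by omega) (by rw [hc₃']; exact hcmp)
    obtain ⟨q', hq', -⟩ := A.R_unique z' e
    have hq'V : q' ≠ 0 ∧ q' ≠ 1 := A.rel_V hd hq' (by omega)
    have hq'c : A.cmp q' hq'V = A.cmp j₃ h₃ :=
      A.uniq hd hconn hq'V h₃ hq' hr₃ (by omega) (by omega)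
    have hs2 : 3 ≤ (A.graph 1).dist y e := by
      refine A.sep hd hconn ht hq' ⟨ht0, ht1⟩ hq'V (by omega) ?_
      rw [hts, hq'c, hc₃']
      exact hcmp
    rw [SimpleGraph.dist_comm] at hs2
    omega
  have e1 := A.p_spec 1 1 s x z' hsxz
  have e2 := A.p_spec 1 1 0 x x (A.R_refl x)
  rw [← e1, ← e2, hgoal]

end SymAssocScheme

open SymAssocScheme in
/-- Lemma 3.10: with `Γ = (X, R_1)` connected, `H' = H \ {0,1}` disconnected,
`Ĩ = {i ≠ 0 : p_{11}^i = p_{11}^0}`, `Ũ` the vertex set of a non-singleton component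
of `H'` minimizing `∑_{i ∈ Ũ} v_i`, and `W̃ = {2,…,d} \ (Ĩ ∪ Ũ)` nonempty:
`Γ` has diameter two, i.e. all distances are at most `2` and `p_{11}^i > 0` for
every `i > 1`. -/
theorem diameter_two_of_W_nonempty {X : Type*} [Fintype X] {d : ℕ} (hd : 0 < d)
    (A : SymAssocScheme X d) (hconn : (A.graph 1).Connected)
    (hH' : ¬ ((A.diagram 1).induce {j : Fin (d + 1) | j ≠ 0 ∧ j ≠ 1}).Connected)
    (Itil : Set (Fin (d + 1)))
    (hI : Itil = {j : Fin (d + 1) | j ≠ 0 ∧ A.p 1 1 j = A.p 1 1 0})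
    (Util : Finset (Fin (d + 1)))
    (hU : ∃ c : ((A.diagram 1).induce
          {j : Fin (d + 1) | j ≠ 0 ∧ j ≠ 1}).ConnectedComponent,
        (Util : Set (Fin (d + 1))) = Subtype.val '' c.supp ∧ c.supp.Nontrivial)
    (hUmin : ∀ U' : Finset (Fin (d + 1)),
        (∃ c : ((A.diagram 1).induce
            {j : Fin (d + 1) | j ≠ 0 ∧ j ≠ 1}).ConnectedComponent,
          (U' : Set (Fin (d + 1))) = Subtype.val '' c.supp ∧ c.supp.Nontrivial) →
        ∑ j ∈ Util, A.p j j 0 ≤ ∑ j ∈ U', A.p j j 0)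
    (Wtil : Set (Fin (d + 1)))
    (hW : Wtil = {j : Fin (d + 1) | j ≠ 0 ∧ j ≠ 1 ∧ j ∉ Itil ∧ j ∉ Util})
    (hWne : Wtil.Nonempty) :
    (∀ x y : X, (A.graph 1).dist x y ≤ 2) ∧
    (∀ j : Fin (d + 1), j ≠ 0 → j ≠ 1 → 0 < A.p 1 1 j) := by
  subst hI
  subst hW
  have key : ∀ j : Fin (d + 1), j ≠ 0 → j ≠ 1 → 0 < A.p 1 1 j := by
    intro j hj0 hj1
    by_contra hle
    have hp0 : A.p 1 1 j = 0 := by omega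
    -- the component of Util is the deep component
    obtain ⟨c, hcU, hcnt⟩ := hU
    obtain ⟨v₁, hv₁, v₂, hv₂, hne12⟩ := hcnt
    have hv₁c : SimpleGraph.connectedComponentMk _ v₁ = c :=
      (SimpleGraph.ConnectedComponent.mem_supp_iff c v₁).mp hv₁
    have hv₂c : SimpleGraph.connectedComponentMk _ v₂ = c :=
      (SimpleGraph.ConnectedComponent.mem_supp_iff c v₂).mp hv₂
    -- v₁ is not an Ĩ-class (it has a neighbour in the punctured diagram)
    have hu₁I : A.p 1 1 (v₁ : Fin (d + 1)) ≠ A.p 1 1 0 := by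
      intro hI1
      have hreach := SimpleGraph.ConnectedComponent.exact (hv₁c.trans hv₂c.symm)
      obtain ⟨n, hadj⟩ := exists_adj_of_reachable_ne hreach hne12
      have hadj' : (A.diagram 1).Adj (v₁ : Fin (d + 1)) (n : Fin (d + 1)) := hadj
      exact A.iso hI1 n.2.2 hadj'
    -- hence the component of v₁ is the deep component
    have hcmp1 : A.cmp (v₁ : Fin (d + 1)) v₁.2 = A.cmp j ⟨hj0, hj1⟩ := by
      by_contra hne
      exact hu₁I (A.main_claim hd hconn ⟨hj0, hj1⟩ hp0 v₁.2 hne)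
    have hcF : c = A.cmp j ⟨hj0, hj1⟩ := by
      rw [← hv₁c, ← hcmp1]
      rfl
    -- now take w ∈ W̃ and derive a contradiction
    obtain ⟨w, hwmem⟩ := hWne
    obtain ⟨hw0, hw1, hwI, hwU⟩ := hwmem
    by_cases hwc : A.cmp w ⟨hw0, hw1⟩ = A.cmp j ⟨hj0, hj1⟩
    · apply hwU
      have hmem : (⟨w, ⟨hw0, hw1⟩⟩ : {j : Fin (d + 1) | j ≠ 0 ∧ j ≠ 1}) ∈ c.supp := by
        rw [SimpleGraph.ConnectedComponent.mem_supp_iff, hcF]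
        exact hwc
      have hwset : w ∈ (Util : Set (Fin (d + 1))) := by
        rw [hcU]
        exact ⟨_, hmem, rfl⟩
      exact hwset
    · exact hwI ⟨hw0, A.main_claim hd hconn ⟨hj0, hj1⟩ hp0 ⟨hw0, hw1⟩ hwc⟩
  refine ⟨?_, key⟩
  intro x y
  obtain ⟨jxy, hxy, -⟩ := A.R_unique x y
  by_cases h0 : jxy = 0
  · subst h0
    have : x = y := (A.R_zero x y).mp hxy
    subst this
    rw [SimpleGraph.dist_self]
    omega
  by_cases h1 : jxy = 1
  · subst h1
    have := SimpleGraph.dist_le (A.adj_of_R1 hd hxy).toWalk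
    simp at this
    omega
  · obtain ⟨u, hu1, hu2⟩ := (A.p_pos_iff hxy).1 (key jxy h0 h1)
    have l1 : (A.graph 1).dist x u ≤ 1 := by
      have := SimpleGraph.dist_le (A.adj_of_R1 hd hu1).toWalk
      simpa using this
    have l2 : (A.graph 1).dist u y ≤ 1 := by
      have := SimpleGraph.dist_le (A.adj_of_R1 hd hu2).toWalk
      simpa using this
    have ht : (A.graph 1).dist x y ≤ (A.graph 1).dist x u + (A.graph 1).dist u y :=
      hconn.dist_triangle
    omega
end

section
/- Let (X, {R_0,...,R_d}) be a symmetric association scheme with Γ = (X, R_1) connected, and let H be the unweighted distribution diagram of R_1. Suppose H' = H \ {0,1} is disconnected. Let Ĩ = {i : 1 ≤ i ≤ d, p_{11}^i = p_{11}^0} and let Ũ be the vertex set of a connected component of H' having more than one vertex which minimizes Σ_{i∈Ũ} v_i among all such components. Then {2,...,d} = Ĩ ∪ Ũ; that is, the set W̃ = {2,...,d} \ (Ĩ ∪ Ũ) is empty. -/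
section Aux

open SymAssocScheme

variable {X : Type*} [Fintype X] {d : ℕ}

namespace SymAssocScheme

lemma rel_eq (A : SymAssocScheme X d) {i j : Fin (d+1)} {a b : X}
    (h1 : A.R i a b) (h2 : A.R j a b) : i = j := by
  obtain ⟨i₀, _, hu⟩ := A.R_unique a b
  exact (hu i h1).trans (hu j h2).symm

lemma psymm (A : SymAssocScheme X d) (i j k : Fin (d+1)) : A.p i j k = A.p j i k := by
  obtain ⟨a, b, hab⟩ := A.R_nonempty k
  have h1 := A.p_spec i j k a b hab
  have h2 := A.p_spec j i k b a (A.R_symm _ _ _ hab)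
  rw [← h1, ← h2]
  congr 1
  ext c
  exact ⟨fun ⟨h, h'⟩ => ⟨A.R_symm _ _ _ h', A.R_symm _ _ _ h⟩,
         fun ⟨h, h'⟩ => ⟨A.R_symm _ _ _ h', A.R_symm _ _ _ h⟩⟩

lemma valency_pos (A : SymAssocScheme X d) (j : Fin (d+1)) : 0 < A.p j j 0 := by
  obtain ⟨a, b, hab⟩ := A.R_nonempty j
  have h := A.p_spec j j 0 a a ((A.R_zero a a).mpr rfl)
  have hne : {c : X | A.R j a c ∧ A.R j c a}.Nonempty := ⟨b, hab, A.R_symm _ _ _ hab⟩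
  rw [← h]
  exact (Set.ncard_pos (Set.toFinite _)).mpr hne

lemma exists_rel (A : SymAssocScheme X d) (x : X) (j : Fin (d+1)) : ∃ y, A.R j x y := by
  have h := A.p_spec j j 0 x x ((A.R_zero x x).mpr rfl)
  have := A.valency_pos j
  have hne : {c : X | A.R j x c ∧ A.R j c x}.Nonempty :=
    Set.nonempty_of_ncard_ne_zero (by omega)
  obtain ⟨y, hy, -⟩ := hne
  exact ⟨y, hy⟩

lemma p11_le (A : SymAssocScheme X d) (j : Fin (d+1)) : A.p 1 1 j ≤ A.p 1 1 0 := by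
  obtain ⟨a, b, hab⟩ := A.R_nonempty j
  have h1 := A.p_spec 1 1 j a b hab
  have h2 := A.p_spec 1 1 0 a a ((A.R_zero a a).mpr rfl)
  rw [← h1, ← h2]
  exact Set.ncard_le_ncard
    (fun c hc => ⟨hc.1, A.R_symm _ _ _ hc.1⟩) (Set.toFinite _)

/-- Lemma A: a configuration giving an edge in the distribution diagram. -/
lemma diagram_adj (A : SymAssocScheme X d) {P Q E : X} {j m : Fin (d+1)}
    (hPQ : A.R j P Q) (hPE : A.R m P E) (hQE : A.R 1 Q E) (hmj : m ≠ j) :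
    (A.diagram 1).Adj m j := by
  have h := A.p_spec m 1 j P Q hPQ
  have hne : {c : X | A.R m P c ∧ A.R 1 c Q}.Nonempty := ⟨E, hPE, A.R_symm _ _ _ hQE⟩
  have hpos : 0 < A.p m 1 j := by
    rw [← h]; exact (Set.ncard_pos (Set.toFinite _)).mpr hne
  have hsym := A.psymm 1 m j
  exact ⟨hmj, by omega⟩

end SymAssocScheme

end Aux

namespace SymAssocScheme

variable {X : Type*} [Fintype X] {d : ℕ}

/-- The vertex set of `H' = H \ {0,1}`. -/
abbrev Svert (d : ℕ) : Set (Fin (d+1)) := {j : Fin (d+1) | j ≠ 0 ∧ j ≠ 1}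

/-- `H'` itself. -/
abbrev Hp (A : SymAssocScheme X d) : SimpleGraph (Svert d) :=
  (A.diagram 1).induce (Svert d)

lemma adj_reach (A : SymAssocScheme X d) {m j : Fin (d+1)}
    (hm : m ∈ Svert d) (hj : j ∈ Svert d) (h : (A.diagram 1).Adj m j) :
    (A.Hp).Reachable ⟨m, hm⟩ ⟨j, hj⟩ := by
  refine SimpleGraph.Adj.reachable ?_
  simpa [SimpleGraph.comap_adj] using h

/-- Lemma B: if `c` sees `a` and `b` in different components of `H'`, then
every common neighbour of `a` and `b` is a neighbour of `c`. -/
lemma Lsub (A : SymAssocScheme X d) {a b c : X} {j j' : Fin (d+1)}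
    (hj : j ∈ Svert d) (hj' : j' ∈ Svert d)
    (hca : A.R j c a) (hcb : A.R j' c b)
    (hre : ¬ (A.Hp).Reachable ⟨j, hj⟩ ⟨j', hj'⟩)
    {e : X} (hae : A.R 1 a e) (hbe : A.R 1 b e) : A.R 1 c e := by
  obtain ⟨m, hm, -⟩ := A.R_unique c e
  by_cases hm0 : m = 0
  · exfalso
    subst hm0
    have hce : c = e := (A.R_zero c e).mp hm
    subst hce
    exact hj.2 (A.rel_eq hca (A.R_symm _ _ _ hae))
  by_cases hm1 : m = 1
  · subst hm1; exact hm
  exfalso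
  have hmS : m ∈ Svert d := ⟨hm0, hm1⟩
  have r1 : (A.Hp).Reachable ⟨m, hmS⟩ ⟨j, hj⟩ := by
    by_cases hmj : m = j
    · subst hmj; exact SimpleGraph.Reachable.refl _
    · exact A.adj_reach hmS hj (A.diagram_adj hca hm hae hmj)
  have r2 : (A.Hp).Reachable ⟨m, hmS⟩ ⟨j', hj'⟩ := by
    by_cases hmj : m = j'
    · subst hmj; exact SimpleGraph.Reachable.refl _
    · exact A.adj_reach hmS hj' (A.diagram_adj hcb hm hbe hmj)
  exact hre (r1.symm.trans r2)

/-- Lemma C: a "twin" relation is isolated in the diagram (its only possible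
diagram-neighbour is `1`). -/
lemma twin_isolated (A : SymAssocScheme X d) {t s : Fin (d+1)}
    (ht : A.p 1 1 t = A.p 1 1 0) (hadj : (A.diagram 1).Adj t s) : s = 1 := by
  by_contra hs1
  have h2 := hadj.2
  have hcases : 0 < A.p 1 t s ∨ 0 < A.p 1 s t := by omega
  -- twin property: for (a,b) ∈ R t, N(a) = N(b)
  have twin : ∀ a b : X, A.R t a b → ∀ e, A.R 1 a e → A.R 1 b e := by
    intro a b hab e hae
    have h1 := A.p_spec 1 1 t a b hab
    have h2 := A.p_spec 1 1 0 a a ((A.R_zero a a).mpr rfl)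
    have hsub : {c : X | A.R 1 a c ∧ A.R 1 c b} ⊆ {c : X | A.R 1 a c ∧ A.R 1 c a} :=
      fun c hc => ⟨hc.1, A.R_symm _ _ _ hc.1⟩
    have heq : {c : X | A.R 1 a c ∧ A.R 1 c b} = {c : X | A.R 1 a c ∧ A.R 1 c a} := by
      apply Set.eq_of_subset_of_ncard_le hsub _ (Set.toFinite _)
      rw [h1, h2, ht]
    have : e ∈ {c : X | A.R 1 a c ∧ A.R 1 c a} := ⟨hae, A.R_symm _ _ _ hae⟩
    rw [← heq] at this
    exact A.R_symm _ _ _ this.2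
  rcases hcases with hpos | hpos
  · obtain ⟨a, b, hab⟩ := A.R_nonempty s
    have h := A.p_spec 1 t s a b hab
    have hne : {c : X | A.R 1 a c ∧ A.R t c b}.Nonempty :=
      Set.nonempty_of_ncard_ne_zero (by omega)
    obtain ⟨c, hc1, hc2⟩ := hne
    -- (c,b) twins; a ∈ N(c) so a ∈ N(b)
    have := twin c b hc2 a (A.R_symm _ _ _ hc1)
    exact hs1 (A.rel_eq hab (A.R_symm _ _ _ this))
  · obtain ⟨a, b, hab⟩ := A.R_nonempty t
    have h := A.p_spec 1 s t a b hab
    have hne : {c : X | A.R 1 a c ∧ A.R s c b}.Nonempty :=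
      Set.nonempty_of_ncard_ne_zero (by omega)
    obtain ⟨c, hc1, hc2⟩ := hne
    have := twin a b hab c hc1
    exact hs1 (A.rel_eq (A.R_symm _ _ _ hc2) this)

lemma twin_reach_eq (A : SymAssocScheme X d) {t : Fin (d+1)} (htS : t ∈ Svert d)
    (ht : A.p 1 1 t = A.p 1 1 0) {v : Svert d}
    (h : (A.Hp).Reachable ⟨t, htS⟩ v) : v = ⟨t, htS⟩ := by
  obtain ⟨W⟩ := h
  cases W with
  | nil => rfl
  | cons h' W' =>
    exfalso
    rename_i u
    have hadj : (A.diagram 1).Adj t u.1 := by simpa [SimpleGraph.comap_adj] using h'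
    exact u.2.2 (A.twin_isolated ht hadj)

end SymAssocScheme

namespace SymAssocScheme

variable {X : Type*} [Fintype X] {d : ℕ}

lemma R1_irrefl (A : SymAssocScheme X d) (h01 : (1 : Fin (d+1)) ≠ 0) (a : X) :
    ¬ A.R 1 a a := fun h => h01 (A.rel_eq h ((A.R_zero a a).mpr rfl))

/-- Lemma D: every vertex of `H'` is joined in `H'` to a vertex `j₂` with
`p 1 1 j₂ > 0`. -/
lemma exists_beta_pos (A : SymAssocScheme X d) (h01 : (1 : Fin (d+1)) ≠ 0)
    (hconn : (A.graph 1).Connected) {j : Fin (d+1)} (hj : j ∈ Svert d) :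
    ∃ j₂, ∃ hj₂ : j₂ ∈ Svert d, 0 < A.p 1 1 j₂ ∧
      (A.Hp).Reachable ⟨j₂, hj₂⟩ ⟨j, hj⟩ := by
  classical
  obtain ⟨x, -, -⟩ := A.R_nonempty 0
  obtain ⟨y, hy⟩ := A.exists_rel x j
  set good : Fin (d+1) → Prop := fun m =>
    m = 0 ∨ m = 1 ∨ ∃ hm : m ∈ Svert d, ∃ j₂, ∃ hj₂ : j₂ ∈ Svert d,
      0 < A.p 1 1 j₂ ∧ (A.Hp).Reachable ⟨j₂, hj₂⟩ ⟨m, hm⟩ with hgood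
  set Z : Set X := {e | ∀ m, A.R m x e → good m} with hZ
  have hcl : ∀ e f, e ∈ Z → A.R 1 e f → f ∈ Z := by
    intro e f he hef m' hm'
    obtain ⟨m, hm, -⟩ := A.R_unique x e
    rcases he m hm with h0 | h1 | ⟨hmS, j₂, hj₂, hp, hr⟩
    · -- e = x
      subst h0
      have hex : x = e := (A.R_zero x e).mp hm
      subst hex
      exact Or.inr (Or.inl (A.rel_eq hm' hef))
    · -- e ∈ N(x)
      subst h1
      by_cases h0' : m' = 0
      · exact Or.inl h0'
      by_cases h1' : m' = 1
      · exact Or.inr (Or.inl h1')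
      have hspec := A.p_spec 1 1 m' x f hm'
      have hne : {c : X | A.R 1 x c ∧ A.R 1 c f}.Nonempty := ⟨e, hm, hef⟩
      have hpos : 0 < A.p 1 1 m' := by
        rw [← hspec]; exact (Set.ncard_pos (Set.toFinite _)).mpr hne
      exact Or.inr (Or.inr ⟨⟨h0', h1'⟩, m', ⟨h0', h1'⟩, hpos,
        SimpleGraph.Reachable.refl _⟩)
    · by_cases h0' : m' = 0
      · exact Or.inl h0'
      by_cases h1' : m' = 1
      · exact Or.inr (Or.inl h1')
      have hmS' : m' ∈ Svert d := ⟨h0', h1'⟩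
      have hr2 : (A.Hp).Reachable ⟨m', hmS'⟩ ⟨m, hmS⟩ := by
        by_cases hmm : m' = m
        · subst hmm; exact SimpleGraph.Reachable.refl _
        · exact A.adj_reach hmS' hmS (A.diagram_adj hm hm' hef hmm)
      exact Or.inr (Or.inr ⟨hmS', j₂, hj₂, hp, hr.trans hr2.symm⟩)
  have hxZ : x ∈ Z := by
    intro m hm
    exact Or.inl (A.rel_eq hm ((A.R_zero x x).mpr rfl))
  have hwalk : ∀ {a b : X}, (A.graph 1).Walk a b → a ∈ Z → b ∈ Z := by
    intro a b W
    induction W with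
    | nil => exact id
    | cons h W ih => exact fun ha => ih (hcl _ _ ha h.2)
  have hyZ : y ∈ Z := by
    obtain ⟨W⟩ := hconn x y
    exact hwalk W hxZ
  rcases hyZ j hy with h0 | h1 | ⟨hmS, j₂, hj₂, hp, hr⟩
  · exact absurd h0 hj.1
  · exact absurd h1 hj.2
  · exact ⟨j₂, hj₂, hp, hr⟩

/-- Double-counting swap. -/
lemma count_swap (P Q : X → Prop) (r : X → X → Prop)
    [DecidablePred P] [DecidablePred Q] [∀ y c, Decidable (r y c)] :
    ∑ y ∈ Finset.univ.filter P, {c | Q c ∧ r y c}.ncard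
      = ∑ c ∈ Finset.univ.filter Q, {y | P y ∧ r y c}.ncard := by
  have key : ∀ (P' Q' : X → Prop) (r' : X → X → Prop)
      [DecidablePred P'] [DecidablePred Q'] [∀ y c, Decidable (r' y c)],
      ∑ y ∈ Finset.univ.filter P', {c | Q' c ∧ r' y c}.ncard
        = ∑ y ∈ Finset.univ, ∑ c ∈ Finset.univ,
            if P' y ∧ Q' c ∧ r' y c then 1 else 0 := by
    intro P' Q' r' _ _ _
    rw [Finset.sum_filter]
    refine Finset.sum_congr rfl fun y _ => ?_
    by_cases hy : P' y
    · simp only [hy, if_true, true_and]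
      rw [Set.ncard_eq_toFinset_card', Set.toFinset_setOf, Finset.card_filter]
    · simp [hy]
  rw [key P Q r, key Q P (fun c y => r y c), Finset.sum_comm]
  refine Finset.sum_congr rfl fun y _ => Finset.sum_congr rfl fun c _ => ?_
  congr 1
  · exact propext (by tauto)

end SymAssocScheme

namespace SymAssocScheme

variable {X : Type*} [Fintype X] {d : ℕ}

/-- helper: cardinality of a filter as an ncard -/
lemma filter_card_eq_ncard (P : X → Prop) [DecidablePred P] :
    (Finset.univ.filter P).card = {x | P x}.ncard := by
  rw [Set.ncard_eq_toFinset_card', Set.toFinset_setOf]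

/-- Per-term bound in the main counting argument. -/
lemma term_ge (A : SymAssocScheme X d) (h01 : (1 : Fin (d+1)) ≠ 0)
    {w w' : Fin (d+1)} (hw : w ∈ Svert d) (hw' : w' ∈ Svert d)
    (hre : ¬ (A.Hp).Reachable ⟨w, hw⟩ ⟨w', hw'⟩)
    (hββ : A.p 1 1 w ≤ A.p 1 1 w')
    {x u y : X} (hxy : A.R w x y) (hxu : A.R w' x u) :
    A.p 1 1 w ≤ {c | (A.R 1 x c ∧ A.R 1 u c) ∧ A.R 1 y c}.ncard := by
  obtain ⟨m, hm, -⟩ := A.R_unique y u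
  have hww' : w ≠ w' := by
    rintro rfl; exact hre (SimpleGraph.Reachable.refl _)
  have hm0 : m ≠ 0 := by
    rintro rfl
    have : y = u := (A.R_zero y u).mp hm
    subst this
    exact hww' (A.rel_eq hxy hxu)
  have hm1 : m ≠ 1 := by
    rintro rfl
    exact hre ((A.adj_reach hw' hw
      (A.diagram_adj hxy hxu hm (Ne.symm hww'))).symm)
  have hmS : m ∈ Svert d := ⟨hm0, hm1⟩
  have hset : {c | (A.R 1 x c ∧ A.R 1 u c) ∧ A.R 1 y c}
      = {c | A.R 1 y c ∧ A.R 1 c u} := by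
    ext c
    constructor
    · rintro ⟨⟨-, hu_c⟩, hy_c⟩
      exact ⟨hy_c, A.R_symm _ _ _ hu_c⟩
    · rintro ⟨h1, h2⟩
      have hx_c : A.R 1 x c :=
        A.Lsub hw hw' hxy hxu hre h1 (A.R_symm _ _ _ h2)
      exact ⟨⟨hx_c, A.R_symm _ _ _ h2⟩, h1⟩
  rw [hset, A.p_spec 1 1 m y u hm]
  by_cases hr : (A.Hp).Reachable ⟨m, hmS⟩ ⟨w', hw'⟩
  · -- then ¬ Reach w m ; N(x) ∩ N(u) ⊆ N(y), so p 1 1 w' ≤ p 1 1 m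
    have hnr : ¬ (A.Hp).Reachable ⟨w, hw⟩ ⟨m, hmS⟩ := fun h => hre (h.trans hr)
    have hsub : {c | A.R 1 x c ∧ A.R 1 c u} ⊆ {c | A.R 1 y c ∧ A.R 1 c u} := by
      rintro c ⟨h1, h2⟩
      have : A.R 1 y c :=
        A.Lsub hw hmS (A.R_symm _ _ _ hxy) hm hnr h1 (A.R_symm _ _ _ h2)
      exact ⟨this, h2⟩
    have hcard := Set.ncard_le_ncard hsub (Set.toFinite _)
    rw [A.p_spec 1 1 w' x u hxu, A.p_spec 1 1 m y u hm] at hcard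
    exact le_trans hββ hcard
  · -- ¬ Reach w' m ; N(x) ∩ N(y) ⊆ N(u), so p 1 1 w ≤ p 1 1 m
    have hnr : ¬ (A.Hp).Reachable ⟨w', hw'⟩ ⟨m, hmS⟩ := fun h => hr h.symm
    have hsub : {c | A.R 1 x c ∧ A.R 1 c y} ⊆ {c | A.R 1 y c ∧ A.R 1 c u} := by
      rintro c ⟨h1, h2⟩
      have : A.R 1 u c :=
        A.Lsub hw' hmS (A.R_symm _ _ _ hxu) (A.R_symm _ _ _ hm) hnr h1
          (A.R_symm _ _ _ h2)
      exact ⟨A.R_symm _ _ _ h2, A.R_symm _ _ _ this⟩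
    have hcard := Set.ncard_le_ncard hsub (Set.toFinite _)
    rw [A.p_spec 1 1 w x y hxy, A.p_spec 1 1 m y u hm] at hcard
    exact hcard

/-- Main counting lemma: two distinct components of `H'` cannot both carry a
relation with `0 < p₁₁ < k`. -/
lemma no_two_components (A : SymAssocScheme X d) (h01 : (1 : Fin (d+1)) ≠ 0)
    {w w' : Fin (d+1)} (hw : w ∈ Svert d) (hw' : w' ∈ Svert d)
    (hre : ¬ (A.Hp).Reachable ⟨w, hw⟩ ⟨w', hw'⟩)
    (hβpos : 0 < A.p 1 1 w) (hββ : A.p 1 1 w ≤ A.p 1 1 w')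
    (hβk : A.p 1 1 w' ≠ A.p 1 1 0) : False := by
  classical
  obtain ⟨x, -, -⟩ := A.R_nonempty 0
  obtain ⟨u, hxu⟩ := A.exists_rel x w'
  -- counting identity (i):  k * p w 1 1 = v_w * β_w
  have count1 :
      ∑ y ∈ Finset.univ.filter (fun y => A.R w x y),
        {c | A.R 1 x c ∧ A.R 1 y c}.ncard
      = ∑ c ∈ Finset.univ.filter (fun c => A.R 1 x c),
        {y | A.R w x y ∧ A.R 1 y c}.ncard :=
    count_swap _ _ _
  have hTcard : (Finset.univ.filter (fun y => A.R w x y)).card = A.p w w 0 := by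
    rw [filter_card_eq_ncard]
    rw [← A.p_spec w w 0 x x ((A.R_zero x x).mpr rfl)]
    congr 1
    ext c
    exact ⟨fun h => ⟨h, A.R_symm _ _ _ h⟩, fun h => h.1⟩
  have hNcard : (Finset.univ.filter (fun c => A.R 1 x c)).card = A.p 1 1 0 := by
    rw [filter_card_eq_ncard]
    rw [← A.p_spec 1 1 0 x x ((A.R_zero x x).mpr rfl)]
    congr 1
    ext c
    exact ⟨fun h => ⟨h, A.R_symm _ _ _ h⟩, fun h => h.1⟩
  have hLHS1 : ∑ y ∈ Finset.univ.filter (fun y => A.R w x y),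
      {c | A.R 1 x c ∧ A.R 1 y c}.ncard = A.p w w 0 * A.p 1 1 w := by
    rw [← hTcard, Finset.sum_congr rfl (fun y hy => ?_), Finset.sum_const,
      smul_eq_mul]
    have hxy : A.R w x y := (Finset.mem_filter.mp hy).2
    rw [← A.p_spec 1 1 w x y hxy]
    congr 1
    ext c
    exact ⟨fun h => ⟨h.1, A.R_symm _ _ _ h.2⟩, fun h => ⟨h.1, A.R_symm _ _ _ h.2⟩⟩
  have hRHS1 : ∑ c ∈ Finset.univ.filter (fun c => A.R 1 x c),
      {y | A.R w x y ∧ A.R 1 y c}.ncard = A.p 1 1 0 * A.p w 1 1 := by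
    rw [← hNcard, Finset.sum_congr rfl (fun c hc => ?_), Finset.sum_const,
      smul_eq_mul]
    exact A.p_spec w 1 1 x c (Finset.mem_filter.mp hc).2
  have identity1 : A.p w w 0 * A.p 1 1 w = A.p 1 1 0 * A.p w 1 1 := by
    rw [← hLHS1, count1, hRHS1]
  -- counting inequality (ii)
  have count2 :
      ∑ y ∈ Finset.univ.filter (fun y => A.R w x y),
        {c | (A.R 1 x c ∧ A.R 1 u c) ∧ A.R 1 y c}.ncard
      = ∑ c ∈ Finset.univ.filter (fun c => A.R 1 x c ∧ A.R 1 u c),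
        {y | A.R w x y ∧ A.R 1 y c}.ncard :=
    count_swap _ _ _
  have hFcard : (Finset.univ.filter (fun c => A.R 1 x c ∧ A.R 1 u c)).card
      = A.p 1 1 w' := by
    rw [filter_card_eq_ncard]
    rw [← A.p_spec 1 1 w' x u hxu]
    congr 1
    ext c
    exact ⟨fun h => ⟨h.1, A.R_symm _ _ _ h.2⟩, fun h => ⟨h.1, A.R_symm _ _ _ h.2⟩⟩
  have hRHS2 : ∑ c ∈ Finset.univ.filter (fun c => A.R 1 x c ∧ A.R 1 u c),
      {y | A.R w x y ∧ A.R 1 y c}.ncard = A.p 1 1 w' * A.p w 1 1 := by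
    rw [← hFcard, Finset.sum_congr rfl (fun c hc => ?_), Finset.sum_const,
      smul_eq_mul]
    exact A.p_spec w 1 1 x c (Finset.mem_filter.mp hc).2.1
  have hLHS2 : A.p w w 0 * A.p 1 1 w ≤
      ∑ y ∈ Finset.univ.filter (fun y => A.R w x y),
        {c | (A.R 1 x c ∧ A.R 1 u c) ∧ A.R 1 y c}.ncard := by
    calc A.p w w 0 * A.p 1 1 w
        = ∑ _y ∈ Finset.univ.filter (fun y => A.R w x y), A.p 1 1 w := by
          rw [Finset.sum_const, smul_eq_mul, hTcard]
      _ ≤ _ := by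
          refine Finset.sum_le_sum fun y hy => ?_
          exact A.term_ge h01 hw hw' hre hββ (Finset.mem_filter.mp hy).2 hxu
  have hineq : A.p w w 0 * A.p 1 1 w ≤ A.p 1 1 w' * A.p w 1 1 := by
    calc A.p w w 0 * A.p 1 1 w ≤ _ := hLHS2
      _ = A.p 1 1 w' * A.p w 1 1 := by rw [count2, hRHS2]
  -- conclude k ≤ β w' < k
  have hlt : A.p 1 1 w' < A.p 1 1 0 := lt_of_le_of_ne (A.p11_le w') hβk
  have hvpos : 0 < A.p w w 0 := A.valency_pos w
  -- multiply hineq by k and use identity1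
  have hfinal : A.p 1 1 0 * (A.p w w 0 * A.p 1 1 w)
      ≤ A.p 1 1 w' * (A.p w w 0 * A.p 1 1 w) := by
    calc A.p 1 1 0 * (A.p w w 0 * A.p 1 1 w)
        ≤ A.p 1 1 0 * (A.p 1 1 w' * A.p w 1 1) :=
          Nat.mul_le_mul_left _ hineq
      _ = A.p 1 1 w' * (A.p 1 1 0 * A.p w 1 1) := by ring
      _ = A.p 1 1 w' * (A.p w w 0 * A.p 1 1 w) := by rw [← identity1]
  have hMpos : 0 < A.p w w 0 * A.p 1 1 w := Nat.mul_pos hvpos hβpos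
  have : A.p 1 1 0 ≤ A.p 1 1 w' := Nat.le_of_mul_le_mul_right
    (by simpa [Nat.mul_comm] using hfinal) hMpos
  omega

end SymAssocScheme

open SymAssocScheme in
/-- Theorem 3.11: with `Γ = (X, R_1)` connected, `H' = H \ {0,1}` disconnected,
`Ĩ = {i ≠ 0 : p_{11}^i = p_{11}^0}`, and `Ũ` the vertex set of a non-singleton
component of `H'` minimizing `∑_{i ∈ Ũ} v_i`, we have `{2,…,d} = Ĩ ∪ Ũ`;
that is, `W̃ = {2,…,d} \ (Ĩ ∪ Ũ)` is empty. -/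
theorem W_empty {X : Type*} [Fintype X] {d : ℕ} (hd : 0 < d)
    (A : SymAssocScheme X d) (hconn : (A.graph 1).Connected)
    (hH' : ¬ ((A.diagram 1).induce {j : Fin (d + 1) | j ≠ 0 ∧ j ≠ 1}).Connected)
    (Itil : Set (Fin (d + 1)))
    (hI : Itil = {j : Fin (d + 1) | j ≠ 0 ∧ A.p 1 1 j = A.p 1 1 0})
    (Util : Finset (Fin (d + 1)))
    (hU : ∃ c : ((A.diagram 1).induce
          {j : Fin (d + 1) | j ≠ 0 ∧ j ≠ 1}).ConnectedComponent,
        (Util : Set (Fin (d + 1))) = Subtype.val '' c.supp ∧ c.supp.Nontrivial)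
    (hUmin : ∀ U' : Finset (Fin (d + 1)),
        (∃ c : ((A.diagram 1).induce
            {j : Fin (d + 1) | j ≠ 0 ∧ j ≠ 1}).ConnectedComponent,
          (U' : Set (Fin (d + 1))) = Subtype.val '' c.supp ∧ c.supp.Nontrivial) →
        ∑ j ∈ Util, A.p j j 0 ≤ ∑ j ∈ U', A.p j j 0) :
    {j : Fin (d + 1) | j ≠ 0 ∧ j ≠ 1 ∧ j ∉ Itil ∧ j ∉ Util} = ∅ := by
  classical
  have h01 : (1 : Fin (d + 1)) ≠ 0 := by
    intro h
    have := congrArg Fin.val h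
    simp [Fin.val_one'] at this
    omega
  rw [Set.eq_empty_iff_forall_notMem]
  rintro j ⟨hj0, hj1, hjI, hjU⟩
  have hjS : j ∈ Svert d := ⟨hj0, hj1⟩
  have hβj : A.p 1 1 j ≠ A.p 1 1 0 := by
    intro h; exact hjI (by rw [hI]; exact ⟨hj0, h⟩)
  -- the component of j contains some w with 0 < p₁₁ʷ < k
  obtain ⟨w, hwS, hwpos, hwreach⟩ := A.exists_beta_pos h01 hconn hjS
  have hβwk : A.p 1 1 w ≠ A.p 1 1 0 := by
    intro h
    have heq := A.twin_reach_eq hwS h hwreach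
    have hjw : j = w := congrArg Subtype.val heq
    exact hβj (hjw ▸ h)
  -- the component Ũ contains some w' with 0 < p₁₁ʷ' < k
  obtain ⟨comp, hUeq, hnt⟩ := hU
  obtain ⟨v₁, hv₁, v₂, hv₂, hv12⟩ := hnt
  obtain ⟨w', hw'S, hw'pos, hw'reach⟩ := A.exists_beta_pos h01 hconn v₁.2
  have hw'v₁ : (A.Hp).Reachable ⟨w', hw'S⟩ v₁ := hw'reach
  have hw'mk : ((A.diagram 1).induce
      {j : Fin (d + 1) | j ≠ 0 ∧ j ≠ 1}).connectedComponentMk ⟨w', hw'S⟩ = comp := by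
    rw [SimpleGraph.ConnectedComponent.sound hw'v₁]
    exact (SimpleGraph.ConnectedComponent.mem_supp_iff _ _).mp hv₁
  have hβw'k : A.p 1 1 w' ≠ A.p 1 1 0 := by
    intro h
    have h1 := A.twin_reach_eq hw'S h hw'v₁
    have hr2 : (A.Hp).Reachable ⟨w', hw'S⟩ v₂ := by
      apply SimpleGraph.ConnectedComponent.exact
      rw [hw'mk]
      exact ((SimpleGraph.ConnectedComponent.mem_supp_iff _ _).mp hv₂).symm
    have h2 := A.twin_reach_eq hw'S h hr2
    exact hv12 (h1.trans h2.symm)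
  -- w and w' are in different components of H'
  have hnotreach : ¬ (A.Hp).Reachable ⟨w, hwS⟩ ⟨w', hw'S⟩ := by
    intro hr
    apply hjU
    have hjmem : (⟨j, hjS⟩ : {j : Fin (d + 1) | j ≠ 0 ∧ j ≠ 1}) ∈ comp.supp := by
      rw [SimpleGraph.ConnectedComponent.mem_supp_iff]
      rw [SimpleGraph.ConnectedComponent.sound (hwreach.symm.trans hr)]
      exact hw'mk
    have : j ∈ (Util : Set (Fin (d + 1))) := by
      rw [hUeq]; exact ⟨⟨j, hjS⟩, hjmem, rfl⟩
    exact_mod_cast this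
  rcases le_total (A.p 1 1 w) (A.p 1 1 w') with h | h
  · exact A.no_two_components h01 hwS hw'S hnotreach hwpos h hβw'k
  · exact A.no_two_components h01 hw'S hwS (fun hh => hnotreach hh.symm) hw'pos h hβwk
end
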